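/- Let φ : [0,∞) → ℝ be Lipschitz with φ(0) = 0. Then the map Ω_φ defined on finitely supported sequences by Ω_φ(x) = Σₙ xₙ φ(log(‖x‖₂/|xₙ|)) eₙ (with Ω_φ(0) = 0, and terms with xₙ = 0 interpreted as 0) is quasi-linear: it is homogeneous, i.e., Ω_φ(λx) = λ Ω_φ(x) for all scalars λ, and there is a constant C > 0 such that ‖Ω_φ(x+y) − Ω_φ(x) − Ω_φ(y)‖₂ ≤ C(‖x‖₂ + ‖y‖₂) for all finitely supported x, y. -/

import Mathlib

open Real

/-- The ℓ₂ norm of a finitely supported sequence. -/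
noncomputable def l2 (x : ℕ →₀ ℝ) : ℝ :=
  Real.sqrt (∑ n ∈ x.support, (x n) ^ 2)

/-- The Kalton–Peck type quasi-linear map `Ω_φ(x) = ∑ₙ xₙ φ(log(‖x‖₂/|xₙ|)) eₙ` on `c₀₀`. -/
noncomputable def Omega (φ : ℝ → ℝ) (x : ℕ →₀ ℝ) : ℕ →₀ ℝ :=
  Finsupp.onFinset x.support
    (fun n => x n * φ (Real.log (l2 x / |x n|)))
    (fun n h => Finsupp.mem_support_iff.2 (left_ne_zero_of_mul h))


lemma l2_congr (x : ℕ →₀ ℝ) (s : Finset ℕ) (h : x.support ⊆ s) :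
    l2 x = Real.sqrt (∑ n ∈ s, (x n) ^ 2) := by
  unfold l2
  congr 1
  exact Finset.sum_subset h (fun n _ hn => by
    simp [Finsupp.notMem_support_iff.1 hn])

lemma l2_nonneg (x : ℕ →₀ ℝ) : 0 ≤ l2 x := Real.sqrt_nonneg _

lemma l2_zero : l2 0 = 0 := by simp [l2]

lemma abs_le_l2 (x : ℕ →₀ ℝ) (n : ℕ) : |x n| ≤ l2 x := by
  by_cases hn : n ∈ x.support
  · have h1 : (x n) ^ 2 ≤ ∑ m ∈ x.support, (x m) ^ 2 :=
      Finset.single_le_sum (fun m _ => sq_nonneg (x m)) hn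
    calc |x n| = Real.sqrt ((x n) ^ 2) := (Real.sqrt_sq_eq_abs _).symm
      _ ≤ l2 x := Real.sqrt_le_sqrt h1
  · simp [Finsupp.notMem_support_iff.1 hn, l2_nonneg]

lemma l2_pos (x : ℕ →₀ ℝ) (hx : x ≠ 0) : 0 < l2 x := by
  obtain ⟨n, hn⟩ : ∃ n, x n ≠ 0 := by
    by_contra h
    push_neg at h
    exact hx (Finsupp.ext fun n => h n)
  have := abs_le_l2 x n
  have : 0 < |x n| := abs_pos.2 hn
  linarith [abs_le_l2 x n]

lemma l2_le_sqrt (x : ℕ →₀ ℝ) (s : Finset ℕ) (hs : x.support ⊆ s) (B : ℕ → ℝ)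
    (hB : ∀ n ∈ s, |x n| ≤ B n) :
    l2 x ≤ Real.sqrt (∑ n ∈ s, (B n) ^ 2) := by
  rw [l2_congr x s hs]
  apply Real.sqrt_le_sqrt
  apply Finset.sum_le_sum
  intro n hn
  calc (x n) ^ 2 = |x n| ^ 2 := (sq_abs _).symm
    _ ≤ (B n) ^ 2 := by
        have := hB n hn
        have := abs_nonneg (x n)
        nlinarith

lemma sqrt_sum_mul_sq (s : Finset ℕ) (c : ℝ) (f : ℕ → ℝ) :
    Real.sqrt (∑ n ∈ s, (c * f n) ^ 2) = |c| * Real.sqrt (∑ n ∈ s, (f n) ^ 2) := by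
  simp_rw [mul_pow]
  rw [← Finset.mul_sum, Real.sqrt_mul (sq_nonneg c), Real.sqrt_sq_eq_abs]

lemma minkowski (s : Finset ℕ) (f g : ℕ → ℝ) :
    Real.sqrt (∑ n ∈ s, (f n + g n) ^ 2) ≤
      Real.sqrt (∑ n ∈ s, (f n) ^ 2) + Real.sqrt (∑ n ∈ s, (g n) ^ 2) := by
  let u : EuclideanSpace ℝ s := WithLp.toLp 2 (fun i => f i)
  let v : EuclideanSpace ℝ s := WithLp.toLp 2 (fun i => g i)
  have h := norm_add_le u v
  have hu : ‖u‖ = Real.sqrt (∑ n ∈ s, (f n) ^ 2) := by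
    rw [EuclideanSpace.norm_eq]
    congr 1
    rw [← Finset.sum_coe_sort s (fun n => (f n)^2)]
    congr 1
    ext i
    simp [u, sq_abs]
  have hv : ‖v‖ = Real.sqrt (∑ n ∈ s, (g n) ^ 2) := by
    rw [EuclideanSpace.norm_eq]
    congr 1
    rw [← Finset.sum_coe_sort s (fun n => (g n)^2)]
    congr 1
    ext i
    simp [v, sq_abs]
  have huv : ‖u + v‖ = Real.sqrt (∑ n ∈ s, (f n + g n) ^ 2) := by
    rw [EuclideanSpace.norm_eq]
    congr 1
    rw [← Finset.sum_coe_sort s (fun n => (f n + g n)^2)]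
    congr 1
    ext i
    simp [u, v, sq_abs, PiLp.add_apply]
  rw [hu, hv, huv] at h
  exact h

lemma l2_add_le (u v : ℕ →₀ ℝ) : l2 (u + v) ≤ l2 u + l2 v := by
  have hs : (u + v).support ⊆ u.support ∪ v.support := Finsupp.support_add
  rw [l2_congr (u+v) _ hs, l2_congr u _ Finset.subset_union_left,
    l2_congr v _ Finset.subset_union_right]
  simp_rw [Finsupp.add_apply]
  exact minkowski _ _ _

lemma l2_neg (u : ℕ →₀ ℝ) : l2 (-u) = l2 u := by
  unfold l2
  rw [Finsupp.support_neg]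
  congr 1
  apply Finset.sum_congr rfl
  intro n _
  simp


noncomputable def gr (φ : ℝ → ℝ) (r t : ℝ) : ℝ := t * φ (Real.log (r / |t|))

lemma gr_neg (φ : ℝ → ℝ) (r t : ℝ) : gr φ r (-t) = -gr φ r t := by
  simp [gr, abs_neg, neg_mul]

lemma sub1 (φ : ℝ → ℝ) (L r : ℝ) (hL : 0 ≤ L)
    (hLip : ∀ s ∈ Set.Ici (0:ℝ), ∀ t ∈ Set.Ici (0:ℝ), |φ s - φ t| ≤ L * |s - t|)
    (s' t : ℝ) (hs : 0 < s') (hst : s' ≤ t) (htr : t ≤ r) :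
    s' * |φ (Real.log (r / s')) - φ (Real.log (r / t))| ≤ L * t := by
  have ht : 0 < t := hs.trans_le hst
  have hr : 0 < r := ht.trans_le htr
  have h1 : (0:ℝ) ≤ Real.log (r / s') :=
    Real.log_nonneg ((one_le_div hs).2 (hst.trans htr))
  have h2 : (0:ℝ) ≤ Real.log (r / t) := Real.log_nonneg ((one_le_div ht).2 htr)
  have hL' := hLip _ (Set.mem_Ici.2 h1) _ (Set.mem_Ici.2 h2)
  have hmono : Real.log s' ≤ Real.log t := Real.log_le_log hs hst
  have habs : |Real.log (r/s') - Real.log (r/t)| = Real.log (t / s') := by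
    rw [Real.log_div hr.ne' hs.ne', Real.log_div hr.ne' ht.ne',
      Real.log_div ht.ne' hs.ne']
    rw [show Real.log r - Real.log s' - (Real.log r - Real.log t)
        = Real.log t - Real.log s' by ring]
    exact abs_of_nonneg (sub_nonneg.2 hmono)
  have hkey : Real.log (t / s') ≤ t / s' - 1 :=
    Real.log_le_sub_one_of_pos (div_pos ht hs)
  have h3 : s' * (t / s') = t := mul_div_cancel₀ t hs.ne'
  calc s' * |φ (Real.log (r / s')) - φ (Real.log (r / t))|
      ≤ s' * (L * |Real.log (r/s') - Real.log (r/t)|) :=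
        mul_le_mul_of_nonneg_left hL' hs.le
    _ = L * (s' * Real.log (t / s')) := by rw [habs]; ring
    _ ≤ L * t := by
        apply mul_le_mul_of_nonneg_left _ hL
        nlinarith [mul_le_mul_of_nonneg_left hkey hs.le]

lemma caseA (φ : ℝ → ℝ) (L r : ℝ) (hL : 0 ≤ L)
    (hLip : ∀ s ∈ Set.Ici (0:ℝ), ∀ t ∈ Set.Ici (0:ℝ), |φ s - φ t| ≤ L * |s - t|)
    (a b : ℝ) (ha : 0 ≤ a) (hb : 0 ≤ b) (habr : a + b ≤ r) :
    |gr φ r (a + b) - gr φ r a - gr φ r b| ≤ 2 * L * (a + b) := by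
  rcases eq_or_lt_of_le ha with rfl | ha'
  · simp [gr]
    positivity
  rcases eq_or_lt_of_le hb with rfl | hb'
  · simp [gr]
    positivity
  have hc : 0 < a + b := by linarith
  have e1 : gr φ r (a + b) - gr φ r a - gr φ r b
      = a * (φ (Real.log (r / (a+b))) - φ (Real.log (r / a)))
        + b * (φ (Real.log (r / (a+b))) - φ (Real.log (r / b))) := by
    unfold gr
    rw [abs_of_pos hc, abs_of_pos ha', abs_of_pos hb']
    ring
  rw [e1]
  calc |a * (φ (Real.log (r / (a+b))) - φ (Real.log (r / a)))
        + b * (φ (Real.log (r / (a+b))) - φ (Real.log (r / b)))|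
      ≤ |a * (φ (Real.log (r / (a+b))) - φ (Real.log (r / a)))|
        + |b * (φ (Real.log (r / (a+b))) - φ (Real.log (r / b)))| := abs_add_le _ _
    _ = a * |φ (Real.log (r / a)) - φ (Real.log (r / (a+b)))|
        + b * |φ (Real.log (r / b)) - φ (Real.log (r / (a+b)))| := by
          rw [abs_mul, abs_mul, abs_of_pos ha', abs_of_pos hb',
            abs_sub_comm (φ (Real.log (r / (a+b)))),
            abs_sub_comm (φ (Real.log (r / (a+b))))]
    _ ≤ L * (a + b) + L * (a + b) := by
          apply add_le_add
          · exact sub1 φ L r hL hLip a (a+b) ha' (by linarith) habr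
          · exact sub1 φ L r hL hLip b (a+b) hb' (by linarith) habr
    _ = 2 * L * (a + b) := by ring

lemma caseB (φ : ℝ → ℝ) (L r : ℝ) (hL : 0 ≤ L)
    (hLip : ∀ s ∈ Set.Ici (0:ℝ), ∀ t ∈ Set.Ici (0:ℝ), |φ s - φ t| ≤ L * |s - t|)
    (a b : ℝ) (hb : b ≤ 0) (hab : 0 ≤ a + b) (har : a ≤ r) :
    |gr φ r (a + b) - gr φ r a - gr φ r b| ≤ 2 * L * a := by
  have ha : 0 ≤ a := by linarith
  rcases eq_or_lt_of_le hb with rfl | hb'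
  · simp [gr]
    positivity
  rcases eq_or_lt_of_le hab with hc0 | hc'
  · -- a + b = 0, i.e. b = -a
    have hba : b = -a := by linarith
    subst hba
    rw [gr_neg]
    simp [gr]
    positivity
  · have ha' : 0 < a := by linarith
    have e1 : gr φ r (a + b) - gr φ r a - gr φ r b
        = (a + b) * (φ (Real.log (r / (a+b))) - φ (Real.log (r / a)))
          + (-b) * (φ (Real.log (r / (-b))) - φ (Real.log (r / a))) := by
      unfold gr
      rw [abs_of_pos hc', abs_of_pos ha', abs_of_neg hb']
      ring
    rw [e1]
    calc |(a + b) * (φ (Real.log (r / (a+b))) - φ (Real.log (r / a)))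
          + (-b) * (φ (Real.log (r / (-b))) - φ (Real.log (r / a)))|
        ≤ |(a + b) * (φ (Real.log (r / (a+b))) - φ (Real.log (r / a)))|
          + |(-b) * (φ (Real.log (r / (-b))) - φ (Real.log (r / a)))| := abs_add_le _ _
      _ = (a + b) * |φ (Real.log (r / (a+b))) - φ (Real.log (r / a))|
          + (-b) * |φ (Real.log (r / (-b))) - φ (Real.log (r / a))| := by
            rw [abs_mul, abs_mul, abs_of_pos hc', abs_of_pos (neg_pos.2 hb')]
      _ ≤ L * a + L * a := by
            apply add_le_add
            · exact sub1 φ L r hL hLip (a+b) a hc' (by linarith) har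
            · exact sub1 φ L r hL hLip (-b) a (neg_pos.2 hb') (by linarith) har
      _ = 2 * L * a := by ring

lemma key_neg_reduce (φ : ℝ → ℝ) (r a b : ℝ) :
    |gr φ r (-a + -b) - gr φ r (-a) - gr φ r (-b)|
      = |gr φ r (a + b) - gr φ r a - gr φ r b| := by
  rw [show -a + -b = -(a + b) by ring, gr_neg, gr_neg, gr_neg,
    show -gr φ r (a+b) - -gr φ r a - -gr φ r b
      = -(gr φ r (a+b) - gr φ r a - gr φ r b) by ring, abs_neg]

lemma key_comm (φ : ℝ → ℝ) (r a b : ℝ) :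
    |gr φ r (b + a) - gr φ r b - gr φ r a|
      = |gr φ r (a + b) - gr φ r a - gr φ r b| := by
  rw [add_comm b a]
  congr 1
  ring

lemma key (φ : ℝ → ℝ) (L r : ℝ) (hL : 0 ≤ L)
    (hLip : ∀ s ∈ Set.Ici (0:ℝ), ∀ t ∈ Set.Ici (0:ℝ), |φ s - φ t| ≤ L * |s - t|)
    (a b : ℝ) (har : |a| ≤ r) (hbr : |b| ≤ r) (habr : |a + b| ≤ r) :
    |gr φ r (a + b) - gr φ r a - gr φ r b| ≤ 2 * L * (|a| + |b|) := by
  rcases le_total 0 a with ha0 | ha0 <;> rcases le_total 0 b with hb0 | hb0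
  · -- both nonneg
    have h := caseA φ L r hL hLip a b ha0 hb0
      (by rwa [abs_of_nonneg (by linarith : (0:ℝ) ≤ a + b)] at habr)
    rwa [abs_of_nonneg ha0, abs_of_nonneg hb0]
  · -- a ≥ 0, b ≤ 0
    rcases le_total 0 (a + b) with hc | hc
    · have h := caseB φ L r hL hLip a b hb0 hc (by rwa [abs_of_nonneg ha0] at har)
      have : 2 * L * a ≤ 2 * L * (|a| + |b|) := by
        rw [abs_of_nonneg ha0]
        nlinarith [abs_nonneg b]
      linarith
    · have h := caseB φ L r hL hLip (-b) (-a) (by linarith) (by linarith)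
        (by rwa [abs_of_nonpos hb0] at hbr)
      rw [key_comm, key_neg_reduce] at h
      have : 2 * L * (-b) ≤ 2 * L * (|a| + |b|) := by
        rw [abs_of_nonpos hb0]
        nlinarith [abs_nonneg a]
      linarith
  · -- a ≤ 0, b ≥ 0
    rcases le_total 0 (a + b) with hc | hc
    · have h := caseB φ L r hL hLip b a ha0 (by linarith)
        (by rwa [abs_of_nonneg hb0] at hbr)
      rw [key_comm] at h
      have : 2 * L * b ≤ 2 * L * (|a| + |b|) := by
        rw [abs_of_nonneg hb0]
        nlinarith [abs_nonneg a]
      linarith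
    · have h := caseB φ L r hL hLip (-a) (-b) (by linarith) (by linarith)
        (by rwa [abs_of_nonpos ha0] at har)
      rw [key_neg_reduce] at h
      have : 2 * L * (-a) ≤ 2 * L * (|a| + |b|) := by
        rw [abs_of_nonpos ha0]
        nlinarith [abs_nonneg b]
      linarith
  · -- both nonpos
    have h := caseA φ L r hL hLip (-a) (-b) (by linarith) (by linarith)
      (by rw [show -a + -b = -(a+b) by ring]
          rwa [abs_of_nonpos (by linarith : a + b ≤ 0)] at habr)
    rw [key_neg_reduce] at h
    rw [abs_of_nonpos ha0, abs_of_nonpos hb0]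
    linarith

/-- Variant of `Omega` where the norm is replaced by a fixed radius `r`. -/
noncomputable def OmR (φ : ℝ → ℝ) (r : ℝ) (x : ℕ →₀ ℝ) : ℕ →₀ ℝ :=
  Finsupp.onFinset x.support
    (fun n => x n * φ (Real.log (r / |x n|)))
    (fun n h => Finsupp.mem_support_iff.2 (left_ne_zero_of_mul h))

lemma Omega_apply (φ : ℝ → ℝ) (x : ℕ →₀ ℝ) (n : ℕ) :
    Omega φ x n = x n * φ (Real.log (l2 x / |x n|)) := rfl

lemma OmR_apply (φ : ℝ → ℝ) (r : ℝ) (x : ℕ →₀ ℝ) (n : ℕ) :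
    OmR φ r x n = x n * φ (Real.log (r / |x n|)) := rfl

lemma shift_bound (φ : ℝ → ℝ) (L r : ℝ) (hL : 0 ≤ L)
    (hLip : ∀ s ∈ Set.Ici (0:ℝ), ∀ t ∈ Set.Ici (0:ℝ), |φ s - φ t| ≤ L * |s - t|)
    (hr : 0 ≤ r) (w : ℕ →₀ ℝ) (hw : l2 w ≤ r) :
    l2 (Omega φ w - OmR φ r w) ≤ L * r := by
  rcases eq_or_ne w 0 with rfl | hw0
  · have h0 : Omega φ 0 - OmR φ r 0 = 0 := by
      ext n
      simp [Omega_apply, OmR_apply]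
    rw [h0, l2_zero]
    exact mul_nonneg hL hr
  · have hlw : 0 < l2 w := l2_pos w hw0
    have hrpos : 0 < r := hlw.trans_le hw
    have hsupp : (Omega φ w - OmR φ r w).support ⊆ w.support := by
      intro n hn
      rw [Finsupp.mem_support_iff] at hn ⊢
      intro h0
      apply hn
      simp [Finsupp.sub_apply, Omega_apply, OmR_apply, h0]
    have hlog0 : 0 ≤ Real.log (r / l2 w) :=
      Real.log_nonneg ((one_le_div hlw).2 hw)
    have hbd : ∀ n ∈ w.support,
        |(Omega φ w - OmR φ r w) n| ≤ (L * Real.log (r / l2 w)) * |w n| := by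
      intro n hn
      have hwn : w n ≠ 0 := Finsupp.mem_support_iff.1 hn
      have habs : 0 < |w n| := abs_pos.2 hwn
      have hwl : |w n| ≤ l2 w := abs_le_l2 w n
      rw [Finsupp.sub_apply, Omega_apply, OmR_apply, ← mul_sub, abs_mul]
      have h1 : (0:ℝ) ≤ Real.log (l2 w / |w n|) :=
        Real.log_nonneg ((one_le_div habs).2 hwl)
      have h2 : (0:ℝ) ≤ Real.log (r / |w n|) :=
        Real.log_nonneg ((one_le_div habs).2 (hwl.trans hw))
      have hLipn := hLip _ (Set.mem_Ici.2 h1) _ (Set.mem_Ici.2 h2)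
      have hd : |Real.log (l2 w / |w n|) - Real.log (r / |w n|)|
          = Real.log (r / l2 w) := by
        rw [Real.log_div hlw.ne' habs.ne', Real.log_div hrpos.ne' habs.ne',
          Real.log_div hrpos.ne' hlw.ne',
          show Real.log (l2 w) - Real.log |w n| - (Real.log r - Real.log |w n|)
            = -(Real.log r - Real.log (l2 w)) by ring, abs_neg]
        exact abs_of_nonneg (sub_nonneg.2 (Real.log_le_log hlw hw))
      calc |w n| * |φ (Real.log (l2 w / |w n|)) - φ (Real.log (r / |w n|))|
          ≤ |w n| * (L * |Real.log (l2 w / |w n|) - Real.log (r / |w n|)|) :=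
            mul_le_mul_of_nonneg_left hLipn (abs_nonneg _)
        _ = (L * Real.log (r / l2 w)) * |w n| := by rw [hd]; ring
    calc l2 (Omega φ w - OmR φ r w)
        ≤ Real.sqrt (∑ n ∈ w.support, ((L * Real.log (r / l2 w)) * |w n|) ^ 2) :=
          l2_le_sqrt _ _ hsupp _ hbd
      _ = |L * Real.log (r / l2 w)| * Real.sqrt (∑ n ∈ w.support, (|w n|) ^ 2) :=
          sqrt_sum_mul_sq _ _ _
      _ = (L * Real.log (r / l2 w)) * l2 w := by
          rw [abs_of_nonneg (mul_nonneg hL hlog0)]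
          congr 1
          unfold l2
          congr 1
          exact Finset.sum_congr rfl (fun n _ => by rw [sq_abs])
      _ ≤ L * r := by
          have hkey : Real.log (r / l2 w) ≤ r / l2 w - 1 :=
            Real.log_le_sub_one_of_pos (div_pos hrpos hlw)
          have h3 : l2 w * (r / l2 w) = r := mul_div_cancel₀ r hlw.ne'
          nlinarith [mul_le_mul_of_nonneg_left hkey hlw.le,
            mul_le_mul_of_nonneg_left hlog0 hL, mul_nonneg hL hlog0]

theorem stmt6 (φ : ℝ → ℝ) (L : ℝ) (hL : 0 ≤ L) (hφ0 : φ 0 = 0)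
    (hLip : ∀ s ∈ Set.Ici (0:ℝ), ∀ t ∈ Set.Ici (0:ℝ), |φ s - φ t| ≤ L * |s - t|) :
    (∀ (c : ℝ) (x : ℕ →₀ ℝ), Omega φ (c • x) = c • Omega φ x) ∧
    ∃ C : ℝ, 0 < C ∧ ∀ x y : ℕ →₀ ℝ,
      l2 (Omega φ (x + y) - Omega φ x - Omega φ y) ≤ C * (l2 x + l2 y) := by
  constructor
  · -- homogeneity
    intro c x
    rcases eq_or_ne c 0 with rfl | hc
    · rw [zero_smul, zero_smul]
      ext n
      simp [Omega_apply]
    · have hcs : (c • x).support ⊆ x.support := Finsupp.support_smul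
      have hl2s : l2 (c • x) = |c| * l2 x := by
        rw [l2_congr (c • x) x.support hcs]
        have : ∀ n ∈ x.support, ((c • x) n) ^ 2 = (c * x n) ^ 2 := by
          intro n _
          rw [Finsupp.smul_apply, smul_eq_mul]
        rw [Finset.sum_congr rfl this, sqrt_sum_mul_sq]
        rfl
      ext n
      rw [Finsupp.smul_apply, smul_eq_mul, Omega_apply, Omega_apply,
        Finsupp.smul_apply, smul_eq_mul, hl2s]
      have habs : |c * x n| = |c| * |x n| := abs_mul c (x n)
      rw [habs, mul_div_mul_left (l2 x) (|x n|) (abs_ne_zero.2 hc)]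
      ring
  · -- quasi-additivity
    refine ⟨5 * L + 1, by linarith, ?_⟩
    intro x y
    set r := l2 x + l2 y with hrdef
    have h0x : 0 ≤ l2 x := l2_nonneg x
    have h0y : 0 ≤ l2 y := l2_nonneg y
    have hr0 : 0 ≤ r := by positivity
    have hxr : l2 x ≤ r := by simp [hrdef]; linarith
    have hyr : l2 y ≤ r := by simp [hrdef]; linarith
    have hzr : l2 (x + y) ≤ r := l2_add_le x y
    -- bounds for the three shift terms
    have hT1 : l2 (Omega φ (x + y) - OmR φ r (x + y)) ≤ L * r :=
      shift_bound φ L r hL hLip hr0 (x + y) hzr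
    have hT3 : l2 (Omega φ x - OmR φ r x) ≤ L * r :=
      shift_bound φ L r hL hLip hr0 x hxr
    have hT4 : l2 (Omega φ y - OmR φ r y) ≤ L * r :=
      shift_bound φ L r hL hLip hr0 y hyr
    -- bound for the central term
    have hT2 : l2 (OmR φ r (x + y) - OmR φ r x - OmR φ r y) ≤ 2 * L * r := by
      set s : Finset ℕ := x.support ∪ y.support with hsdef
      have hsupp : (OmR φ r (x + y) - OmR φ r x - OmR φ r y).support ⊆ s := by
        intro n hn
        rw [Finsupp.mem_support_iff] at hn
        by_contra hns
        rw [hsdef, Finset.mem_union] at hns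
        push_neg at hns
        have hx0 : x n = 0 := Finsupp.notMem_support_iff.1 hns.1
        have hy0 : y n = 0 := Finsupp.notMem_support_iff.1 hns.2
        apply hn
        simp [Finsupp.sub_apply, Finsupp.add_apply, OmR_apply, hx0, hy0]
      have hbd : ∀ n ∈ s,
          |(OmR φ r (x + y) - OmR φ r x - OmR φ r y) n|
            ≤ (2 * L) * (|x n| + |y n|) := by
        intro n _
        have h1 : |x n| ≤ r := (abs_le_l2 x n).trans hxr
        have h2 : |y n| ≤ r := (abs_le_l2 y n).trans hyr
        have h3 : |x n + y n| ≤ r :=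
          (abs_add_le _ _).trans (by linarith [abs_le_l2 x n, abs_le_l2 y n])
        have hk := key φ L r hL hLip (x n) (y n) h1 h2 h3
        have he : (OmR φ r (x + y) - OmR φ r x - OmR φ r y) n
            = gr φ r (x n + y n) - gr φ r (x n) - gr φ r (y n) := by
          rw [Finsupp.sub_apply, Finsupp.sub_apply, OmR_apply, OmR_apply, OmR_apply,
            Finsupp.add_apply]
          rfl
        rw [he]
        calc |gr φ r (x n + y n) - gr φ r (x n) - gr φ r (y n)|
            ≤ 2 * L * (|x n| + |y n|) := hk
          _ = (2 * L) * (|x n| + |y n|) := by ring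
      calc l2 (OmR φ r (x + y) - OmR φ r x - OmR φ r y)
          ≤ Real.sqrt (∑ n ∈ s, ((2 * L) * (|x n| + |y n|)) ^ 2) :=
            l2_le_sqrt _ _ hsupp _ hbd
        _ = |2 * L| * Real.sqrt (∑ n ∈ s, (|x n| + |y n|) ^ 2) :=
            sqrt_sum_mul_sq _ _ _
        _ ≤ |2 * L| * (Real.sqrt (∑ n ∈ s, (|x n|) ^ 2)
              + Real.sqrt (∑ n ∈ s, (|y n|) ^ 2)) :=
            mul_le_mul_of_nonneg_left (minkowski s _ _) (abs_nonneg _)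
        _ = 2 * L * r := by
            rw [abs_of_nonneg (by linarith : (0:ℝ) ≤ 2 * L)]
            have ex : Real.sqrt (∑ n ∈ s, (|x n|) ^ 2) = l2 x := by
              rw [l2_congr x s (by rw [hsdef]; exact Finset.subset_union_left)]
              congr 1
              exact Finset.sum_congr rfl (fun n _ => sq_abs _)
            have ey : Real.sqrt (∑ n ∈ s, (|y n|) ^ 2) = l2 y := by
              rw [l2_congr y s (by rw [hsdef]; exact Finset.subset_union_right)]
              congr 1
              exact Finset.sum_congr rfl (fun n _ => sq_abs _)
            rw [ex, ey, hrdef]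
    -- assemble
    have hdecomp : Omega φ (x + y) - Omega φ x - Omega φ y
        = (Omega φ (x + y) - OmR φ r (x + y))
          + (OmR φ r (x + y) - OmR φ r x - OmR φ r y)
          + (-(Omega φ x - OmR φ r x)) + (-(Omega φ y - OmR φ r y)) := by
      abel
    calc l2 (Omega φ (x + y) - Omega φ x - Omega φ y)
        = l2 ((Omega φ (x + y) - OmR φ r (x + y))
            + (OmR φ r (x + y) - OmR φ r x - OmR φ r y)
            + (-(Omega φ x - OmR φ r x)) + (-(Omega φ y - OmR φ r y))) := by
          rw [hdecomp]
      _ ≤ l2 ((Omega φ (x + y) - OmR φ r (x + y))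
            + (OmR φ r (x + y) - OmR φ r x - OmR φ r y)
            + (-(Omega φ x - OmR φ r x))) + l2 (-(Omega φ y - OmR φ r y)) :=
          l2_add_le _ _
      _ ≤ (l2 ((Omega φ (x + y) - OmR φ r (x + y))
            + (OmR φ r (x + y) - OmR φ r x - OmR φ r y))
            + l2 (-(Omega φ x - OmR φ r x))) + l2 (-(Omega φ y - OmR φ r y)) := by
          gcongr
          exact l2_add_le _ _
      _ ≤ ((l2 (Omega φ (x + y) - OmR φ r (x + y))
            + l2 (OmR φ r (x + y) - OmR φ r x - OmR φ r y))
            + l2 (-(Omega φ x - OmR φ r x))) + l2 (-(Omega φ y - OmR φ r y)) := by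
          gcongr
          exact l2_add_le _ _
      _ = l2 (Omega φ (x + y) - OmR φ r (x + y))
            + l2 (OmR φ r (x + y) - OmR φ r x - OmR φ r y)
            + l2 (Omega φ x - OmR φ r x) + l2 (Omega φ y - OmR φ r y) := by
          rw [l2_neg, l2_neg]
      _ ≤ L * r + 2 * L * r + L * r + L * r :=
          add_le_add (add_le_add (add_le_add hT1 hT2) hT3) hT4
      _ ≤ (5 * L + 1) * (l2 x + l2 y) := by
          rw [← hrdef]
          nlinarith
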